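/- Let λ be a real number with λ > 0 and λ ≠ 1, and let m ≥ 1 and n ≥ 1 be integers. Then m·B_n(λ) − m^n·((1 − λ^m)/(1 − λ))·B_n(λ^m) = ∑_{j=0}^{n−1} C(n,j)·B_j(λ^m)·m^j·∑_{k=1}^{m−1} λ^k·k^{n−j}. -/

import Mathlib

/-- The λ-Bernoulli numbers `B_n(λ)`, defined by `B_0(λ) = Log λ / (λ - 1)` and, for `n ≥ 1`,
by the recurrence `λ·∑_{k=0}^{n} C(n,k)·B_k(λ) - B_n(λ) = (1 if n = 1, 0 if n ≥ 2)`,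
encoding the generating function `(Log λ + t)/(λ e^t - 1) = ∑ B_n(λ) t^n/n!`. -/
noncomputable def lambdaBernoulli (lam : ℂ) : ℕ → ℂ
  | 0 => Complex.log lam / (lam - 1)
  | n + 1 =>
      ((if n = 0 then (1 : ℂ) else 0) -
        lam * ∑ k : Fin (n + 1), ((n + 1).choose (k : ℕ) : ℂ) * lambdaBernoulli lam k) / (lam - 1)


section Aux
open Finset
lemma lb_rec (lam : ℂ) (h : lam ≠ 1) (n : ℕ) :
    lam * ∑ k ∈ range (n + 2), ((n + 1).choose k : ℂ) * lambdaBernoulli lam k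
      - lambdaBernoulli lam (n + 1) = if n = 0 then 1 else 0 := by
  have h' : lam - 1 ≠ 0 := sub_ne_zero.mpr h
  have hB : lambdaBernoulli lam (n + 1) = ((if n = 0 then (1 : ℂ) else 0) -
      lam * ∑ k ∈ range (n + 1), ((n + 1).choose k : ℂ) * lambdaBernoulli lam k) / (lam - 1) := by
    rw [lambdaBernoulli,
      Fin.sum_univ_eq_sum_range (fun k => ((n + 1).choose k : ℂ) * lambdaBernoulli lam k)]
  rw [Finset.sum_range_succ, Nat.choose_self, hB]
  push_cast
  field_simp
  split_ifs <;> ring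

noncomputable def lbP (ν : ℂ) (m n : ℕ) (x : ℂ) : ℂ :=
  ∑ j ∈ range (n + 1), (n.choose j : ℂ) * lambdaBernoulli ν j * (m : ℂ) ^ j * x ^ (n - j)

lemma sum_choose_mul_pow (p : ℕ) (x : ℂ) :
    ∑ i ∈ range (p + 1), (p.choose i : ℂ) * x ^ i = (x + 1) ^ p := by
  rw [add_pow]
  refine Finset.sum_congr rfl fun i _ => ?_
  ring

lemma lbInner_sum (n j : ℕ) (hj : j ≤ n) (x : ℂ) :
    ∑ k ∈ Ico j (n + 1), (n.choose k : ℂ) * (k.choose j : ℂ) * x ^ (k - j)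
      = (n.choose j : ℂ) * (x + 1) ^ (n - j) := by
  rw [Finset.sum_Ico_eq_sum_range]
  have hnj : n + 1 - j = (n - j) + 1 := by omega
  rw [hnj, ← sum_choose_mul_pow (n - j) x, Finset.mul_sum]
  refine Finset.sum_congr rfl fun i hi => ?_
  have hi' : i ≤ n - j := by simpa [Nat.lt_succ_iff] using hi
  have h1 : j + i ≤ n := by omega
  have h2 : (n.choose (j + i)) * ((j + i).choose j) = n.choose j * ((n - j).choose i) := by
    have := Nat.choose_mul (n := n) (Nat.le_add_right j i)
    simpa using this
  have h2c : ((n.choose (j + i)) : ℂ) * (((j + i).choose j) : ℂ)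
      = ((n.choose j : ℕ) : ℂ) * (((n - j).choose i : ℕ) : ℂ) := by exact_mod_cast h2
  have h3 : j + i - j = i := by omega
  rw [h3, h2c]
  ring

lemma lbP_binom (ν : ℂ) (m n : ℕ) (x : ℂ) :
    ∑ k ∈ range (n + 1), (n.choose k : ℂ) * lbP ν m k x = lbP ν m n (x + 1) := by
  simp only [lbP, Finset.mul_sum]
  have h := Finset.sum_Ico_Ico_comm 0 (n + 1)
    (fun j k => (n.choose k : ℂ) * ((k.choose j : ℂ) * lambdaBernoulli ν j * (m : ℂ) ^ j * x ^ (k - j)))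
  simp only [← Finset.range_eq_Ico] at h
  rw [← h]
  refine Finset.sum_congr rfl fun j hj => ?_
  have hj' : j ≤ n := by simpa [Nat.lt_succ_iff] using Finset.mem_range.mp hj
  have : ∀ k ∈ Ico j (n + 1),
      (n.choose k : ℂ) * ((k.choose j : ℂ) * lambdaBernoulli ν j * (m : ℂ) ^ j * x ^ (k - j))
      = (lambdaBernoulli ν j * (m : ℂ) ^ j) * ((n.choose k : ℂ) * (k.choose j : ℂ) * x ^ (k - j)) := by
    intro k _; ring
  rw [Finset.sum_congr rfl this, ← Finset.mul_sum, lbInner_sum n j hj']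
  ring

lemma lb_key (μ : ℂ) (m : ℕ) (hμ : μ ≠ 1) (hν : μ ^ m ≠ 1)
    (hlog : Complex.log (μ ^ m) = (m : ℂ) * Complex.log μ) :
    ∀ n : ℕ, (m : ℂ) * lambdaBernoulli μ n
      = ∑ a ∈ range m, μ ^ a * lbP (μ ^ m) m n (a : ℂ) := by
  have hμ1 : μ - 1 ≠ 0 := sub_ne_zero.mpr hμ
  have hν1 : μ ^ m - 1 ≠ 0 := sub_ne_zero.mpr hν
  intro n
  induction n using Nat.strong_induction_on with
  | _ n ih =>
    rcases n with _ | n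
    · have hl : ∀ a : ℕ, lbP (μ ^ m) m 0 (a : ℂ) = lambdaBernoulli (μ ^ m) 0 := by
        intro a; simp [lbP]
      simp only [hl]
      rw [← Finset.sum_mul, geom_sum_eq hμ m]
      simp only [lambdaBernoulli]
      rw [hlog]
      field_simp
    · -- notation
      set ν := μ ^ m with hνdef
      set S := ∑ a ∈ range m, μ ^ a * lbP ν m (n + 1) (a : ℂ) with hS
      set S' := ∑ a ∈ range m, μ ^ a * lbP ν m (n + 1) ((a : ℂ) + 1) with hS'
      have h1 := lb_rec μ hμ n
      have h7 := lb_rec ν hν n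
      have h2 : ∑ k ∈ range (n + 2), ((n + 1).choose k : ℂ) * lambdaBernoulli μ k
          = (∑ k ∈ range (n + 1), ((n + 1).choose k : ℂ) * lambdaBernoulli μ k)
            + lambdaBernoulli μ (n + 1) := by
        rw [Finset.sum_range_succ]; simp
      have h3 : (m : ℂ) * ∑ k ∈ range (n + 1), ((n + 1).choose k : ℂ) * lambdaBernoulli μ k
          = S' - S := by
        have step1 : (m : ℂ) * ∑ k ∈ range (n + 1), ((n + 1).choose k : ℂ) * lambdaBernoulli μ k
            = ∑ k ∈ range (n + 1), ∑ a ∈ range m,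
                ((n + 1).choose k : ℂ) * (μ ^ a * lbP ν m k (a : ℂ)) := by
          rw [Finset.mul_sum]
          refine Finset.sum_congr rfl fun k hk => ?_
          rw [← Finset.mul_sum, ← ih k (Finset.mem_range.mp hk)]
          ring
        rw [step1, Finset.sum_comm, hS', hS, ← Finset.sum_sub_distrib]
        refine Finset.sum_congr rfl fun a _ => ?_
        have hb := lbP_binom ν m (n + 1) (a : ℂ)
        have hs := Finset.sum_range_succ
          (fun k => ((n + 1).choose k : ℂ) * lbP ν m k (a : ℂ)) (n + 1)
        simp only [Nat.choose_self, Nat.cast_one, one_mul] at hs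
        have hfac : ∑ k ∈ range (n + 1), ((n + 1).choose k : ℂ) * (μ ^ a * lbP ν m k (a : ℂ))
            = μ ^ a * ∑ k ∈ range (n + 1), ((n + 1).choose k : ℂ) * lbP ν m k (a : ℂ) := by
          rw [Finset.mul_sum]; exact Finset.sum_congr rfl fun k _ => by ring
        rw [hfac]
        linear_combination μ ^ a * hb - μ ^ a * hs
      have h4 : μ * S' = S + μ ^ m * lbP ν m (n + 1) ((m : ℕ) : ℂ)
          - lbP ν m (n + 1) ((0 : ℕ) : ℂ) := by
        have e : μ * S' = ∑ a ∈ range m,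
            (fun a : ℕ => μ ^ a * lbP ν m (n + 1) ((a : ℕ) : ℂ)) (a + 1) := by
          rw [hS', Finset.mul_sum]
          refine Finset.sum_congr rfl fun a _ => ?_
          push_cast
          ring
        have e2 := Finset.sum_range_succ' (fun a : ℕ => μ ^ a * lbP ν m (n + 1) ((a : ℕ) : ℂ)) m
        have e3 := Finset.sum_range_succ (fun a : ℕ => μ ^ a * lbP ν m (n + 1) ((a : ℕ) : ℂ)) m
        rw [e, hS]
        linear_combination e3 - e2
      have h5 : lbP ν m (n + 1) ((0 : ℕ) : ℂ)
          = (m : ℂ) ^ (n + 1) * lambdaBernoulli ν (n + 1) := by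
        rw [lbP, Finset.sum_range_succ, Finset.sum_eq_zero]
        · simp
          ring
        · intro j hj
          have hz : n + 1 - j ≠ 0 := by have := Finset.mem_range.mp hj; omega
          simp [zero_pow hz]
      have h6 : lbP ν m (n + 1) ((m : ℕ) : ℂ)
          = (m : ℂ) ^ (n + 1) * ∑ k ∈ range (n + 2),
              ((n + 1).choose k : ℂ) * lambdaBernoulli ν k := by
        rw [lbP, Finset.mul_sum]
        refine Finset.sum_congr rfl fun j hj => ?_
        have hj' : j ≤ n + 1 := by have := Finset.mem_range.mp hj; omega
        have hpow : (m : ℂ) ^ j * (m : ℂ) ^ (n + 1 - j) = (m : ℂ) ^ (n + 1) := by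
          rw [← pow_add]; congr 1; omega
        linear_combination (((n + 1).choose j : ℂ) * lambdaBernoulli ν j) * hpow
      have hfin : (μ - 1) * ((m : ℂ) * lambdaBernoulli μ (n + 1) - S)
          = (m : ℂ) * (if n = 0 then (1 : ℂ) else 0)
            - (m : ℂ) ^ (n + 1) * (if n = 0 then (1 : ℂ) else 0) := by
        linear_combination (m : ℂ) * h1 - (m : ℂ) * μ * h2 - μ * h3 - h4 + h5 - μ ^ m * h6
          - (m : ℂ) ^ (n + 1) * h7
      have hz : (m : ℂ) * (if n = 0 then (1 : ℂ) else 0)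
          - (m : ℂ) ^ (n + 1) * (if n = 0 then (1 : ℂ) else 0) = 0 := by
        rcases n with _ | n <;> simp
      rw [hz] at hfin
      rcases mul_eq_zero.mp hfin with h | h
      · exact absurd h hμ1
      · exact sub_eq_zero.mp h

end Aux

/-- for real `λ > 0`, `λ ≠ 1` and integers `m ≥ 1`, `n ≥ 1`,
`m·B_n(λ) - m^n·((1 - λ^m)/(1 - λ))·B_n(λ^m)
  = ∑_{j=0}^{n-1} C(n,j)·B_j(λ^m)·m^j·∑_{k=1}^{m-1} λ^k·k^{n-j}`. -/
theorem lambdaBernoulli_multiplication_remainder (lam : ℝ) (hpos : 0 < lam) (h1 : lam ≠ 1)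
    (m : ℕ) (hm : 1 ≤ m) (n : ℕ) (hn : 1 ≤ n) :
    (m : ℂ) * lambdaBernoulli (lam : ℂ) n -
        (m : ℂ) ^ n * ((1 - (lam : ℂ) ^ m) / (1 - (lam : ℂ))) * lambdaBernoulli ((lam : ℂ) ^ m) n =
      ∑ j ∈ Finset.range n,
        (n.choose j : ℂ) * lambdaBernoulli ((lam : ℂ) ^ m) j * (m : ℂ) ^ j *
          ∑ k ∈ Finset.Icc 1 (m - 1), (lam : ℂ) ^ k * (k : ℂ) ^ (n - j) := by
  open Finset in

  have hμ : (lam : ℂ) ≠ 1 := Complex.ofReal_ne_one.mpr h1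
  have hmr : lam ^ m ≠ 1 := by
    rcases lt_or_gt_of_ne h1 with h | h
    · exact ne_of_lt (pow_lt_one₀ hpos.le h (by omega))
    · exact ne_of_gt (one_lt_pow₀ h (by omega))
  have hν : (lam : ℂ) ^ m ≠ 1 := by
    rw [← Complex.ofReal_pow]
    exact Complex.ofReal_ne_one.mpr hmr
  have hlog : Complex.log ((lam : ℂ) ^ m) = (m : ℂ) * Complex.log (lam : ℂ) := by
    rw [← Complex.ofReal_pow, ← Complex.ofReal_log (le_of_lt (pow_pos hpos m)),
      Real.log_pow, ← Complex.ofReal_log hpos.le]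
    push_cast
    ring
  set μ : ℂ := (lam : ℂ) with hμdef
  set ν : ℂ := (lam : ℂ) ^ m with hνdef
  have key := lb_key μ m hμ hν hlog n
  have hsplit : ∀ a : ℕ, lbP ν m n (a : ℂ)
      = (∑ j ∈ range n, (n.choose j : ℂ) * lambdaBernoulli ν j * (m : ℂ) ^ j * (a : ℂ) ^ (n - j))
        + lambdaBernoulli ν n * (m : ℂ) ^ n := by
    intro a
    rw [lbP, Finset.sum_range_succ, Nat.choose_self, Nat.sub_self]
    push_cast
    ring
  have e1 : ∑ a ∈ range m, μ ^ a * lbP ν m n (a : ℂ)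
      = (∑ a ∈ range m, μ ^ a *
          ∑ j ∈ range n, (n.choose j : ℂ) * lambdaBernoulli ν j * (m : ℂ) ^ j * (a : ℂ) ^ (n - j))
        + (∑ a ∈ range m, μ ^ a) * (lambdaBernoulli ν n * (m : ℂ) ^ n) := by
    rw [Finset.sum_mul, ← Finset.sum_add_distrib]
    refine Finset.sum_congr rfl fun a _ => ?_
    rw [hsplit a]; ring
  have e2 : ∑ a ∈ range m, μ ^ a *
        ∑ j ∈ range n, (n.choose j : ℂ) * lambdaBernoulli ν j * (m : ℂ) ^ j * (a : ℂ) ^ (n - j)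
      = ∑ j ∈ range n, (n.choose j : ℂ) * lambdaBernoulli ν j * (m : ℂ) ^ j *
          ∑ a ∈ range m, μ ^ a * (a : ℂ) ^ (n - j) := by
    simp only [Finset.mul_sum]
    rw [Finset.sum_comm]
    refine Finset.sum_congr rfl fun j _ => ?_
    refine Finset.sum_congr rfl fun a _ => ?_
    ring
  have e3 : ∀ j ∈ range n, ∑ a ∈ range m, μ ^ a * (a : ℂ) ^ (n - j)
      = ∑ k ∈ Finset.Icc 1 (m - 1), μ ^ k * (k : ℂ) ^ (n - j) := by
    intro j hj
    have hnj : n - j ≠ 0 := by have := Finset.mem_range.mp hj; omega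
    have hIcc : Finset.Icc 1 (m - 1) = Finset.Ico 1 m := by
      rw [← Finset.Ico_add_one_right_eq_Icc]; congr 1; omega
    rw [hIcc, Finset.range_eq_Ico,
      Finset.sum_eq_sum_Ico_succ_bot (by omega : 0 < m)]
    simp [zero_pow hnj]
  have geo : ∑ a ∈ range m, μ ^ a = (1 - μ ^ m) / (1 - μ) := by
    rw [geom_sum_eq hμ m, div_eq_div_iff (sub_ne_zero.mpr hμ) (sub_ne_zero.mpr hμ.symm)]
    ring
  rw [key, e1, e2, geo]
  rw [Finset.sum_congr rfl fun j hj => by rw [e3 j hj]]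
  ring
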